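/- In BS(1,2), the element t^n a² t^{-n} equals a^{2^{n+1}}, and the word t^n a² t^{-n} (of length 2n+2) is a geodesic; in particular the distance from the identity to a^{2^{n+1}} in the word metric on BS(1,2) is exactly 2n+2. -/

import Mathlib

def bsRel (q : ℤ) : Set (FreeGroup Bool) :=
  {FreeGroup.of true * FreeGroup.of false * (FreeGroup.of true)⁻¹ *
    (FreeGroup.of false ^ q)⁻¹}

abbrev BS (q : ℤ) := PresentedGroup (bsRel q)

def bsA (q : ℤ) : BS q := PresentedGroup.of false

def bsT (q : ℤ) : BS q := PresentedGroup.of true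

def evalWord (q : ℤ) (w : List (Bool × Bool)) : BS q :=
  PresentedGroup.mk (bsRel q) (FreeGroup.mk w)

/-- The word `t^n a² t^(-n)` over `{a,a⁻¹,t,t⁻¹}`. -/
def wWord (n : ℕ) : List (Bool × Bool) :=
  List.replicate n (true, true) ++ List.replicate 2 (false, true) ++
    List.replicate n (true, false)

namespace BSAux

@[ext] structure GA where
  k : ℤ
  b : ℚ

instance : Mul GA := ⟨fun x y => ⟨x.k + y.k, x.b + (2:ℚ) ^ x.k * y.b⟩⟩
instance : One GA := ⟨⟨0, 0⟩⟩
instance : Inv GA := ⟨fun x => ⟨-x.k, -((2:ℚ) ^ (-x.k) * x.b)⟩⟩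
@[simp] lemma mul_k (x y : GA) : (x * y).k = x.k + y.k := rfl
@[simp] lemma mul_b (x y : GA) : (x * y).b = x.b + (2:ℚ) ^ x.k * y.b := rfl
@[simp] lemma one_k : (1 : GA).k = 0 := rfl
@[simp] lemma one_b : (1 : GA).b = 0 := rfl
@[simp] lemma inv_k (x : GA) : x⁻¹.k = -x.k := rfl
@[simp] lemma inv_b (x : GA) : x⁻¹.b = -((2:ℚ) ^ (-x.k) * x.b) := rfl

instance : Group GA where
  mul_assoc x y z := by
    ext
    · simp [add_assoc]
    · simp [zpow_add₀ (two_ne_zero (α := ℚ))]; ring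
  one_mul x := by ext <;> simp
  mul_one x := by ext <;> simp
  inv_mul_cancel x := by
    ext
    · simp
    · simp [zpow_neg, zpow_add₀ (two_ne_zero (α := ℚ))]

def fgen : Bool → GA := fun b => if b then ⟨1, 0⟩ else ⟨0, 1⟩

lemma fgen_pow (N : ℕ) : (fgen false) ^ N = (⟨0, (N : ℚ)⟩ : GA) := by
  induction N with
  | zero => rfl
  | succ k ih => rw [pow_succ, ih]; ext <;> simp [fgen] <;> push_cast <;> ring

lemma rel_maps_to_one : ∀ r ∈ bsRel 2, FreeGroup.lift fgen r = 1 := by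
  rintro r hr
  rcases hr with rfl
  simp only [map_mul, map_inv, map_zpow, FreeGroup.lift_apply_of]
  ext <;> simp [fgen, zpow_two, pow_two] <;> norm_num

def φ : BS 2 →* GA := PresentedGroup.toGroup rel_maps_to_one

end BSAux

namespace BSAux

abbrev L := List (Bool × Bool)

def hstep (h : ℤ) : Bool × Bool → ℤ
  | (true, true) => h + 1
  | (true, false) => h - 1
  | (false, _) => h

def hEnd : ℤ → L → ℤ
  | h, [] => h
  | h, x :: v => hEnd (hstep h x) v

def bval : ℤ → L → ℚ
  | _, [] => 0
  | h, (true, s) :: v => bval (hstep h (true, s)) v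
  | h, (false, s) :: v => (if s then 1 else -1) * (2:ℚ) ^ h + bval h v

lemma phi_mk (x : FreeGroup Bool) :
    φ (PresentedGroup.mk (bsRel 2) x) = FreeGroup.lift fgen x := rfl

lemma prod_eq (v : L) : ∀ (h : ℤ) (c : ℚ),
    (⟨h, c⟩ : GA) * (v.map fun x => cond x.2 (fgen x.1) (fgen x.1)⁻¹).prod
      = ⟨hEnd h v, c + bval h v⟩ := by
  induction v with
  | nil => intro h c; simp [hEnd, bval]
  | cons x v ih =>
    intro h c
    obtain ⟨b, s⟩ := x
    simp only [List.map_cons, List.prod_cons, ← mul_assoc]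
    cases b <;> cases s
    · have e : (⟨h, c⟩ : GA) * (cond false (fgen false) (fgen false)⁻¹)
          = ⟨h, c + (-1) * (2:ℚ) ^ h⟩ := by ext <;> simp [fgen]
      rw [e, ih]
      simp [hEnd, bval, hstep]; ring
    · have e : (⟨h, c⟩ : GA) * (cond true (fgen false) (fgen false)⁻¹)
          = ⟨h, c + 1 * (2:ℚ) ^ h⟩ := by ext <;> simp [fgen]
      rw [e, ih]
      simp [hEnd, bval, hstep]; ring
    · have e : (⟨h, c⟩ : GA) * (cond false (fgen true) (fgen true)⁻¹)
          = ⟨h - 1, c⟩ := by ext <;> simp [fgen, sub_eq_add_neg]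
      rw [e, ih]
      simp [hEnd, bval, hstep]
    · have e : (⟨h, c⟩ : GA) * (cond true (fgen true) (fgen true)⁻¹)
          = ⟨h + 1, c⟩ := by ext <;> simp [fgen]
      rw [e, ih]
      simp [hEnd, bval, hstep]

lemma phi_evalWord (v : L) :
    φ (evalWord 2 v) = ⟨hEnd 0 v, bval 0 v⟩ := by
  have h1 : φ (evalWord 2 v) =
      (v.map fun x => cond x.2 (fgen x.1) (fgen x.1)⁻¹).prod := by
    rw [evalWord, phi_mk, FreeGroup.lift_mk]
  have h2 := prod_eq v 0 0
  have h3 : (⟨0, (0:ℚ)⟩ : GA) = 1 := rfl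
  rw [h3, one_mul] at h2
  rw [h1, h2]; ext <;> simp

lemma phi_a_pow (N : ℕ) : φ ((bsA 2) ^ N) = (⟨0, (N : ℚ)⟩ : GA) := by
  rw [map_pow]
  have : φ (bsA 2) = fgen false := PresentedGroup.toGroup.of rel_maps_to_one
  rw [this, fgen_pow]

end BSAux

namespace BSAux

lemma bs_rel : bsT 2 * bsA 2 * (bsT 2)⁻¹ = (bsA 2) ^ 2 := by
  have h1 : PresentedGroup.mk (bsRel 2)
      (FreeGroup.of true * FreeGroup.of false * (FreeGroup.of true)⁻¹ *
        (FreeGroup.of false ^ (2:ℤ))⁻¹) = 1 := by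
    have hmem : (FreeGroup.of true * FreeGroup.of false * (FreeGroup.of true)⁻¹ *
        (FreeGroup.of false ^ (2:ℤ))⁻¹) ∈ Subgroup.normalClosure (bsRel 2) :=
      Subgroup.subset_normalClosure rfl
    exact (QuotientGroup.eq_one_iff _).mpr hmem
  simp only [map_mul, map_inv, map_zpow] at h1
  have h2 : bsT 2 * bsA 2 * (bsT 2)⁻¹ * ((bsA 2) ^ (2:ℤ))⁻¹ = 1 := h1
  have h3 : bsT 2 * bsA 2 * (bsT 2)⁻¹ = (bsA 2) ^ (2:ℤ) :=
    mul_inv_eq_one.mp h2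
  simpa using h3

lemma conj_tower (m : ℕ) :
    (bsT 2) ^ m * (bsA 2) ^ 2 * ((bsT 2)⁻¹) ^ m = (bsA 2) ^ (2 ^ (m + 1)) := by
  induction m with
  | zero => simp
  | succ k ih =>
    have e1 : (bsT 2) ^ (k + 1) * (bsA 2) ^ 2 * ((bsT 2)⁻¹) ^ (k + 1)
        = bsT 2 * ((bsT 2) ^ k * (bsA 2) ^ 2 * ((bsT 2)⁻¹) ^ k) * (bsT 2)⁻¹ := by
      rw [pow_succ' (bsT 2), pow_succ ((bsT 2)⁻¹)]
      group
    rw [e1, ih, ← conj_pow, bs_rel, ← pow_mul]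
    congr 1
    ring

lemma mk_rep_pos (x : Bool) (m : ℕ) :
    FreeGroup.mk (List.replicate m (x, true)) = (FreeGroup.of x) ^ m := by
  induction m with
  | zero => rw [pow_zero, FreeGroup.one_eq_mk]; rfl
  | succ k ih =>
    rw [List.replicate_succ, pow_succ', ← ih,
      show FreeGroup.of x = FreeGroup.mk [(x, true)] from rfl, FreeGroup.mul_mk]
    rfl

lemma inv_of (x : Bool) : (FreeGroup.of x)⁻¹ = FreeGroup.mk [(x, false)] := by
  rw [show FreeGroup.of x = FreeGroup.mk [(x, true)] from rfl, FreeGroup.inv_mk]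
  simp [FreeGroup.invRev]

lemma mk_rep_neg (x : Bool) (m : ℕ) :
    FreeGroup.mk (List.replicate m (x, false)) = ((FreeGroup.of x)⁻¹) ^ m := by
  induction m with
  | zero => rw [pow_zero, FreeGroup.one_eq_mk]; rfl
  | succ k ih =>
    rw [List.replicate_succ, pow_succ', ← ih, inv_of, FreeGroup.mul_mk]
    rfl

end BSAux

namespace BSAux

def hMax : ℤ → L → ℤ
  | h, [] => h
  | h, x :: v => max h (hMax (hstep h x) v)

def hMin : ℤ → L → ℤ
  | h, [] => h
  | h, x :: v => min h (hMin (hstep h x) v)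

def tc : L → ℕ
  | [] => 0
  | (true, _) :: v => tc v + 1
  | (false, _) :: v => tc v

def ac : L → ℕ
  | [] => 0
  | (true, _) :: v => ac v
  | (false, _) :: v => ac v + 1

lemma length_eq (v : L) : v.length = tc v + ac v := by
  induction v with
  | nil => rfl
  | cons x v ih =>
    obtain ⟨b, s⟩ := x
    cases b <;> simp [tc, ac, ih] <;> omega

lemma le_hMax (h : ℤ) (v : L) : h ≤ hMax h v := by
  cases v <;> simp [hMax]

lemma hMin_le (h : ℤ) (v : L) : hMin h v ≤ h := by
  cases v <;> simp [hMin]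

lemma hEnd_le_hMax (h : ℤ) (v : L) : hEnd h v ≤ hMax h v := by
  induction v generalizing h with
  | nil => simp [hEnd, hMax]
  | cons x v ih => simp [hEnd, hMax]; exact Or.inr (ih _)

lemma hMin_le_hEnd (h : ℤ) (v : L) : hMin h v ≤ hEnd h v := by
  induction v generalizing h with
  | nil => simp [hEnd, hMin]
  | cons x v ih => simp [hEnd, hMin]; exact Or.inr (ih _)

lemma bval_bound (v : L) (h : ℤ) :
    |bval h v| ≤ (ac v : ℚ) * (2:ℚ) ^ (hMax h v) := by
  induction v generalizing h with
  | nil => simp [bval, ac, hMax]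
  | cons x v ih =>
    obtain ⟨b, s⟩ := x
    cases b
    · have hm : hMax h ((false, s) :: v) = hMax h v := by
        have := le_hMax h v
        simp [hMax, hstep]; omega
      have h2 : (2:ℚ) ^ h ≤ (2:ℚ) ^ (hMax h v) :=
        zpow_le_zpow_right₀ one_le_two (le_hMax h v)
      simp only [bval, ac, hm]
      calc |(if s then 1 else -1) * (2:ℚ) ^ h + bval h v|
          ≤ |(if s then 1 else -1) * (2:ℚ) ^ h| + |bval h v| := abs_add_le _ _
        _ ≤ (2:ℚ) ^ (hMax h v) + (ac v : ℚ) * (2:ℚ) ^ (hMax h v) := by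
            refine add_le_add ?_ (ih _)
            rw [abs_mul]
            have : (0:ℚ) ≤ (2:ℚ) ^ h := by positivity
            split <;> simpa [abs_of_nonneg this] using h2
        _ = ((ac v + 1 : ℕ) : ℚ) * (2:ℚ) ^ (hMax h v) := by push_cast; ring
    · have h1 : (2:ℚ) ^ (hMax (hstep h (true, s)) v) ≤ (2:ℚ) ^ (hMax h ((true, s) :: v)) := by
        apply zpow_le_zpow_right₀ one_le_two
        simp [hMax]
      simp only [bval, ac]
      calc |bval (hstep h (true, s)) v|
          ≤ (ac v : ℚ) * (2:ℚ) ^ (hMax (hstep h (true, s)) v) := ih _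
        _ ≤ (ac v : ℚ) * (2:ℚ) ^ (hMax h ((true, s) :: v)) :=
            mul_le_mul_of_nonneg_left h1 (by positivity)

lemma tc_bound (v : L) (h : ℤ) :
    (hMax h v - hMin h v) +
      min ((hMax h v - h) + (hEnd h v - hMin h v))
          ((h - hMin h v) + (hMax h v - hEnd h v)) ≤ (tc v : ℤ) := by
  induction v generalizing h with
  | nil => simp [hMax, hMin, hEnd, tc]
  | cons x v ih =>
    obtain ⟨b, s⟩ := x
    have H1 := le_hMax (hstep h (b, s)) v
    have H2 := hMin_le (hstep h (b, s)) v
    have H3 := hEnd_le_hMax (hstep h (b, s)) v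
    have H4 := hMin_le_hEnd (hstep h (b, s)) v
    have IH := ih (hstep h (b, s))
    cases b <;> cases s <;>
      simp only [hMax, hMin, hEnd, tc, hstep] at * <;> push_cast <;> omega


lemma two_mul_le_pow (j : ℕ) : 2 * j ≤ 2 ^ j := by
  cases j with
  | zero => simp
  | succ k =>
    have := Nat.lt_two_pow_self (n := k)
    rw [pow_succ]
    omega

lemma lower_bound (n : ℕ) (v : L) (h0 : hEnd 0 v = 0)
    (hb : bval 0 v = ((2 ^ (n + 1) : ℕ) : ℚ)) : 2 * n + 2 ≤ v.length := by
  have hM0 : (0:ℤ) ≤ hMax 0 v := le_hMax 0 v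
  have hm0 : hMin 0 v ≤ 0 := hMin_le 0 v
  have htc : 2 * hMax 0 v ≤ (tc v : ℤ) := by
    have h := tc_bound v 0
    rw [h0] at h
    omega
  have hab : ((2 ^ (n + 1) : ℕ) : ℚ) ≤ (ac v : ℚ) * (2:ℚ) ^ (hMax 0 v) := by
    have h := bval_bound v 0
    rw [hb] at h
    have habs : |((2 ^ (n + 1) : ℕ) : ℚ)| = ((2 ^ (n + 1) : ℕ) : ℚ) :=
      abs_of_nonneg (by positivity)
    rwa [habs] at h
  rw [length_eq]
  by_cases hle : hMax 0 v ≤ (n : ℤ) + 1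
  · set M' := (hMax 0 v).toNat with hM'
    have hMeq : ((M' : ℤ)) = hMax 0 v := Int.toNat_of_nonneg hM0
    have hMn : M' ≤ n + 1 := by omega
    have hzp : (2:ℚ) ^ (hMax 0 v) = ((2 ^ M' : ℕ) : ℚ) := by
      rw [← hMeq, zpow_natCast]
      push_cast
      ring
    rw [hzp] at hab
    have hnat : 2 ^ (n + 1) ≤ ac v * 2 ^ M' := by exact_mod_cast hab
    have hpow : 2 ^ (n + 1 - M') * 2 ^ M' = 2 ^ (n + 1) := by
      rw [← pow_add]
      congr 1
      omega
    have hac : 2 ^ (n + 1 - M') ≤ ac v := by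
      refine Nat.le_of_mul_le_mul_right ?_ (Nat.two_pow_pos M')
      rw [hpow]
      exact hnat
    have htc2 : (2 * M' : ℤ) ≤ (tc v : ℤ) := by omega
    have htc' : 2 * M' ≤ tc v := by exact_mod_cast htc2
    have hj := two_mul_le_pow (n + 1 - M')
    omega
  · have h4 : (2 * n + 4 : ℤ) ≤ (tc v : ℤ) := by omega
    have h5 : 2 * n + 4 ≤ tc v := by exact_mod_cast h4
    omega

end BSAux

theorem bs12_w_geodesic (n : ℕ) :
    (bsT 2) ^ n * (bsA 2) ^ 2 * ((bsT 2)⁻¹) ^ n = (bsA 2) ^ (2 ^ (n + 1)) ∧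
    evalWord 2 (wWord n) = (bsA 2) ^ (2 ^ (n + 1)) ∧
    (wWord n).length = 2 * n + 2 ∧
    (∀ v : List (Bool × Bool), evalWord 2 v = (bsA 2) ^ (2 ^ (n + 1)) →
      2 * n + 2 ≤ v.length) := by
  refine ⟨BSAux.conj_tower n, ?_, ?_, ?_⟩
  · have hfg : FreeGroup.mk (wWord n) =
        (FreeGroup.of true) ^ n * (FreeGroup.of false) ^ 2 *
          ((FreeGroup.of true)⁻¹) ^ n := by
      rw [wWord, ← FreeGroup.mul_mk, ← FreeGroup.mul_mk,
        BSAux.mk_rep_pos, BSAux.mk_rep_pos, BSAux.mk_rep_neg]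
    rw [evalWord, hfg, map_mul, map_mul, map_pow, map_pow, map_pow, map_inv]
    have h1 : PresentedGroup.mk (bsRel 2) (FreeGroup.of true) = bsT 2 := rfl
    have h2 : PresentedGroup.mk (bsRel 2) (FreeGroup.of false) = bsA 2 := rfl
    rw [h1, h2]
    exact BSAux.conj_tower n
  · simp [wWord]
    omega
  · intro v hv
    have h := congrArg BSAux.φ hv
    rw [BSAux.phi_evalWord, BSAux.phi_a_pow] at h
    exact BSAux.lower_bound n v (congrArg BSAux.GA.k h)
      (by have := congrArg BSAux.GA.b h; simpa using this)
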